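/- If Γ is a Coxeter graph of small type, then for every w∈W the inversion set Φ_w is a closed subset of Φ^+; that is, Φ_w is finite, ⟨α,β⟩ ≥ -1 for all α,β∈Φ_w, and α+β∈Φ_w whenever α,β∈Φ_w satisfy ⟨α,β⟩ = -1. -/

import Mathlib

noncomputable section

namespace ArtinInj

/-- `altProd a b m` is the alternating product `prod(a,b;m) = abab⋯` with `m` factors. -/
def altProd {G : Type*} [Monoid G] (a b : G) : ℕ → G
  | 0 => 1
  | n + 1 => a * altProd b a n

variable {S : Type} [DecidableEq S] [Fintype S]

/-- The braid relations on the free monoid over `S`.  Here `M s t = 0` encodes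
`m_{s,t} = ∞`. -/
def braidRel (M : CoxeterMatrix S) (u v : FreeMonoid S) : Prop :=
  ∃ s t : S, s ≠ t ∧ M s t ≠ 0 ∧
    u = altProd (FreeMonoid.of s) (FreeMonoid.of t) (M s t) ∧
    v = altProd (FreeMonoid.of t) (FreeMonoid.of s) (M s t)

/-- The Artin monoid `G_Γ⁺` of a Coxeter matrix. -/
abbrev ArtinMonoid (M : CoxeterMatrix S) : Type := PresentedMonoid (braidRel M)

/-- The generators `σ_s` of the Artin monoid. -/
def sigma (M : CoxeterMatrix S) (s : S) : ArtinMonoid M := PresentedMonoid.of (braidRel M) s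

/-- The braid relators in the free group over `S`. -/
def artinRels (M : CoxeterMatrix S) : Set (FreeGroup S) :=
  {r | ∃ s t : S, s ≠ t ∧ M s t ≠ 0 ∧
    r = altProd (FreeGroup.of s) (FreeGroup.of t) (M s t) *
        (altProd (FreeGroup.of t) (FreeGroup.of s) (M s t))⁻¹}

/-- The Artin group `G_Γ` of a Coxeter matrix. -/
abbrev ArtinGroup (M : CoxeterMatrix S) : Type := PresentedGroup (artinRels M)

/-- The generators `σ_s` of the Artin group. -/
def agen (M : CoxeterMatrix S) (s : S) : ArtinGroup M := PresentedGroup.of s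

/-- The partial order on the Artin monoid: `g < h ⟺ ∃ f, g f = h`. -/
def mle {M : CoxeterMatrix S} (g h : ArtinMonoid M) : Prop := ∃ f, g * f = h

/-- A Coxeter matrix is of small type when all off-diagonal entries are 2 or 3. -/
def SmallType (M : CoxeterMatrix S) : Prop := ∀ s t : S, s ≠ t → M s t = 2 ∨ M s t = 3

/-- `m ≥ 3` in `{2,3,...,∞}`, where `∞` is encoded by `0`. -/
def BigEntry (m : ℕ) : Prop := m = 0 ∨ 3 ≤ m

/-- A Coxeter matrix has no triangle when there are no three distinct vertices with
pairwise entries `≥ 3`. -/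
def NoTriangle (M : CoxeterMatrix S) : Prop :=
  ¬ ∃ s t r : S, s ≠ t ∧ s ≠ r ∧ t ≠ r ∧
      BigEntry (M s t) ∧ BigEntry (M s r) ∧ BigEntry (M t r)

variable {W : Type} [Group W]

/-- The partial order `u < v` on the Coxeter group: `l(v) = l(u) + l(u⁻¹ v)`. -/
def wle {M : CoxeterMatrix S} (cs : CoxeterSystem M W) (u v : W) : Prop :=
  cs.length v = cs.length u + cs.length (u⁻¹ * v)

/-- The simple root `α_s`. -/
def sroot (s : S) : S → ℝ := Pi.single s 1

/-- The entries `⟨α_s, α_t⟩ = -2 cos (π / m_{s,t})` of the canonical bilinear form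
(equal to `-2` when `m_{s,t} = ∞`, encoded by `M s t = 0`). -/
def formEnt (M : CoxeterMatrix S) (s t : S) : ℝ :=
  if M s t = 0 then -2 else -2 * Real.cos (Real.pi / (M s t : ℝ))

/-- The canonical symmetric bilinear form `⟨·,·⟩` on `U = ℝ^S`. -/
def form (M : CoxeterMatrix S) (x v : S → ℝ) : ℝ :=
  ∑ s : S, ∑ t : S, x s * v t * formEnt M s t

/-- `ρ` is the canonical (geometric) representation of the Coxeter system. -/
def IsGeomRep (M : CoxeterMatrix S) (cs : CoxeterSystem M W)
    (ρ : W →* ((S → ℝ) →ₗ[ℝ] (S → ℝ))) : Prop :=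
  ∀ (s : S) (x : S → ℝ), ρ (cs.simple s) x = x - form M (sroot s) x • sroot s

/-- The root system `Φ = {w α_s}`. -/
def Phi (ρ : W →* ((S → ℝ) →ₗ[ℝ] (S → ℝ))) : Set (S → ℝ) :=
  {u | ∃ (w : W) (s : S), u = ρ w (sroot s)}

/-- The positive roots `Φ⁺`. -/
def PhiPlus (ρ : W →* ((S → ℝ) →ₗ[ℝ] (S → ℝ))) : Set (S → ℝ) :=
  {u | u ∈ Phi ρ ∧ ∀ s : S, 0 ≤ u s}

/-- The negative roots `Φ⁻ = -Φ⁺`. -/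
def PhiMinus (ρ : W →* ((S → ℝ) →ₗ[ℝ] (S → ℝ))) : Set (S → ℝ) :=
  {u | -u ∈ PhiPlus ρ}

/-- The inversion set `Φ_w = {β ∈ Φ⁺ : w⁻¹ β ∈ Φ⁻}`. -/
def invSet (ρ : W →* ((S → ℝ) →ₗ[ℝ] (S → ℝ))) (w : W) : Set (S → ℝ) :=
  {u | u ∈ PhiPlus ρ ∧ ρ w⁻¹ u ∈ PhiMinus ρ}

/-- The depth `dp(β) = min { l(w) : w β ∈ Φ⁻ }` of a positive root. -/
def dp {M : CoxeterMatrix S} (cs : CoxeterSystem M W)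
    (ρ : W →* ((S → ℝ) →ₗ[ℝ] (S → ℝ))) (u : S → ℝ) : ℕ :=
  sInf {l : ℕ | ∃ w : W, ρ w u ∈ PhiMinus ρ ∧ cs.length w = l}

/-- Closed subsets of `Φ⁺`. -/
def ClosedSub (M : CoxeterMatrix S) (ρ : W →* ((S → ℝ) →ₗ[ℝ] (S → ℝ)))
    (A : Set (S → ℝ)) : Prop :=
  A ⊆ PhiPlus ρ ∧ A.Finite ∧
    (∀ a ∈ A, ∀ b ∈ A, -1 ≤ form M a b) ∧
    (∀ a ∈ A, ∀ b ∈ A, form M a b = -1 → a + b ∈ A)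

/-- The field `K = ℚ(x,y)` of rational functions in two variables over `ℚ`. -/
abbrev KK : Type := FractionRing (MvPolynomial (Fin 2) ℚ)

/-- The variable `x` of `K`. -/
def Xv : KK := algebraMap (MvPolynomial (Fin 2) ℚ) KK (MvPolynomial.X 0)

/-- The variable `y` of `K`. -/
def Yv : KK := algebraMap (MvPolynomial (Fin 2) ℚ) KK (MvPolynomial.X 1)

/-- The image in `K` of a polynomial of `ℚ[y]`. -/
def Ty (p : Polynomial ℚ) : KK := Polynomial.eval₂ (Rat.castHom KK) Yv p

/-- The `K`-vector space `V` with basis `{e_β : β ∈ Φ⁺}`. -/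
abbrev VV (ρ : W →* ((S → ℝ) →ₗ[ℝ] (S → ℝ))) : Type := ↥(PhiPlus ρ) →₀ KK

/-- The basis vectors `e_β` of `V` (defined to be `0` for `β ∉ Φ⁺`). -/
def ebase (ρ : W →* ((S → ℝ) →ₗ[ℝ] (S → ℝ))) (u : S → ℝ) : VV ρ := by
  haveI := Classical.dec (u ∈ PhiPlus ρ)
  exact if h : u ∈ PhiPlus ρ then Finsupp.single (⟨u, h⟩ : ↥(PhiPlus ρ)) (1 : KK) else 0

/-- `φ : S → End(V)` is the family of linear maps `φ_s` of Section 3 of the paper. -/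
def PhiMapSpec (M : CoxeterMatrix S) (ρ : W →* ((S → ℝ) →ₗ[ℝ] (S → ℝ)))
    (φ : S → Module.End KK (VV ρ)) : Prop :=
  ∀ s : S, ∀ u ∈ PhiPlus ρ,
    (u = sroot s → φ s (ebase ρ u) = 0) ∧
    (form M (sroot s) u = 0 → φ s (ebase ρ u) = ebase ρ u) ∧
    (0 < form M (sroot s) u → u ≠ sroot s →
      φ s (ebase ρ u) = Yv • ebase ρ (u - form M (sroot s) u • sroot s)) ∧
    (form M (sroot s) u < 0 →
      φ s (ebase ρ u) = (1 - Yv) • ebase ρ u + ebase ρ (u - form M (sroot s) u • sroot s))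

/-- `T : S × Φ⁺ → ℚ[y]` is the family of polynomials `T(s,β)` defined by (D1)–(D9),
by induction on the depth of `β`; the recursion may be applied with any `t ∈ S`
such that `dp(t β) = dp(β) - 1`. -/
def TSpec (M : CoxeterMatrix S) (cs : CoxeterSystem M W)
    (ρ : W →* ((S → ℝ) →ₗ[ℝ] (S → ℝ))) (T : S → (S → ℝ) → Polynomial ℚ) : Prop :=
  (∀ s : S, T s (sroot s) = Polynomial.X ^ 2) ∧
  (∀ s t : S, t ≠ s → T s (sroot t) = 0) ∧
  (∀ s t : S, ∀ u ∈ PhiPlus ρ, 2 ≤ dp cs ρ u →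
    0 < form M (sroot t) u → dp cs ρ (ρ (cs.simple t) u) = dp cs ρ u - 1 →
    (0 < form M (sroot s) u →
      T s u = Polynomial.X ^ (dp cs ρ u) * (Polynomial.X - 1)) ∧
    (form M (sroot s) u = 0 → form M (sroot s) (sroot t) = 0 →
      T s u = Polynomial.X * T s (u - form M (sroot t) u • sroot t)) ∧
    (form M (sroot s) u = 0 → form M (sroot s) (sroot t) = -1 →
      T s u = (Polynomial.X - 1) * T s (u - form M (sroot t) u • sroot t) +
        Polynomial.X * T t (u - form M (sroot t) u • sroot s - form M (sroot t) u • sroot t)) ∧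
    (form M (sroot s) u < 0 → form M (sroot s) (sroot t) = 0 →
      T s u = Polynomial.X * T s (u - form M (sroot t) u • sroot t)) ∧
    (form M (sroot s) u < 0 → form M (sroot s) (sroot t) = -1 →
      -(form M (sroot s) u) < form M (sroot t) u →
      T s u = (Polynomial.X - 1) * T s (u - form M (sroot t) u • sroot t) +
        Polynomial.X * T t (u - (form M (sroot t) u + form M (sroot s) u) • sroot s
          - form M (sroot t) u • sroot t)) ∧
    (form M (sroot s) u < 0 → form M (sroot s) (sroot t) = -1 →
      -(form M (sroot s) u) = form M (sroot t) u →
      T s u = T t (u - form M (sroot t) u • sroot t) +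
        (Polynomial.X - 1) * T s (u - form M (sroot t) u • sroot t)) ∧
    (form M (sroot s) u < 0 → form M (sroot s) (sroot t) = -1 →
      form M (sroot t) u < -(form M (sroot s) u) →
      T s u = Polynomial.X * T s (u - form M (sroot t) u • sroot t) +
        T t (u - form M (sroot t) u • sroot t) +
        Polynomial.X ^ (dp cs ρ u - 1) * (1 - Polynomial.X)))

/-- `ψ : S → End(V)` is the family of linear maps `ψ_s(e_β) = φ_s(e_β) + x T(s,β) e_{α_s}`. -/
def PsiSpec (M : CoxeterMatrix S) (ρ : W →* ((S → ℝ) →ₗ[ℝ] (S → ℝ)))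
    (T : S → (S → ℝ) → Polynomial ℚ) (ψ : S → Module.End KK (VV ρ)) : Prop :=
  ∀ s : S, ∀ u ∈ PhiPlus ρ,
    (u = sroot s → ψ s (ebase ρ u) = (Xv * Ty (T s u)) • ebase ρ (sroot s)) ∧
    (form M (sroot s) u = 0 →
      ψ s (ebase ρ u) = ebase ρ u + (Xv * Ty (T s u)) • ebase ρ (sroot s)) ∧
    (0 < form M (sroot s) u → u ≠ sroot s →
      ψ s (ebase ρ u) = Yv • ebase ρ (u - form M (sroot s) u • sroot s) +
        (Xv * Ty (T s u)) • ebase ρ (sroot s)) ∧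
    (form M (sroot s) u < 0 →
      ψ s (ebase ρ u) = (1 - Yv) • ebase ρ u +
        ebase ρ (u - form M (sroot s) u • sroot s) +
        (Xv * Ty (T s u)) • ebase ρ (sroot s))

/-- The set `σ_s ∗ A` (Lemma 4.4 of the paper). -/
def starSet (M : CoxeterMatrix S) (ρ : W →* ((S → ℝ) →ₗ[ℝ] (S → ℝ)))
    (s : S) (A : Set (S → ℝ)) : Set (S → ℝ) :=
  {sroot s} ∪
  {u | u ∈ PhiPlus ρ ∧ form M (sroot s) u = 0 ∧ u ∈ A} ∪
  {u | u ∈ PhiPlus ρ ∧ 0 < form M (sroot s) u ∧ u ≠ sroot s ∧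
        u - form M (sroot s) u • sroot s ∈ A} ∪
  {u | u ∈ PhiPlus ρ ∧ form M (sroot s) u < 0 ∧ u ∈ A ∧
        u - form M (sroot s) u • sroot s ∈ A}

section Lemma27
set_option linter.unusedSectionVars false

variable {S : Type} [DecidableEq S] [Fintype S] {W : Type} [Group W]

lemma formEnt_diag (M : CoxeterMatrix S) (s : S) : formEnt M s s = 2 := by
  unfold formEnt
  rw [M.diagonal s]
  norm_num [Real.cos_pi]

lemma formEnt_symm (M : CoxeterMatrix S) (s t : S) : formEnt M s t = formEnt M t s := by
  unfold formEnt
  rw [M.isSymm.apply t s]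

lemma formEnt_of_two {M : CoxeterMatrix S} {s t : S} (h : M s t = 2) : formEnt M s t = 0 := by
  unfold formEnt
  rw [h]
  norm_num [Real.cos_pi_div_two]

lemma formEnt_of_three {M : CoxeterMatrix S} {s t : S} (h : M s t = 3) : formEnt M s t = -1 := by
  unfold formEnt
  rw [h]
  norm_num [Real.cos_pi_div_three]

lemma formEnt_small {M : CoxeterMatrix S} (hsmall : SmallType M) {s t : S} (hst : s ≠ t) :
    formEnt M s t = 0 ∨ formEnt M s t = -1 := by
  rcases hsmall s t hst with h | h
  · exact Or.inl (formEnt_of_two h)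
  · exact Or.inr (formEnt_of_three h)

lemma form_symm (M : CoxeterMatrix S) (x y : S → ℝ) : form M x y = form M y x := by
  unfold form
  rw [Finset.sum_comm]
  refine Finset.sum_congr rfl fun s _ => Finset.sum_congr rfl fun t _ => ?_
  rw [formEnt_symm M t s]
  ring

lemma form_add_left (M : CoxeterMatrix S) (x y z : S → ℝ) :
    form M (x + y) z = form M x z + form M y z := by
  unfold form
  rw [← Finset.sum_add_distrib]
  refine Finset.sum_congr rfl fun s _ => ?_
  rw [← Finset.sum_add_distrib]
  refine Finset.sum_congr rfl fun t _ => ?_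
  simp [add_mul, Pi.add_apply]

lemma form_smul_left (M : CoxeterMatrix S) (c : ℝ) (x z : S → ℝ) :
    form M (c • x) z = c * form M x z := by
  unfold form
  rw [Finset.mul_sum]
  refine Finset.sum_congr rfl fun s _ => ?_
  rw [Finset.mul_sum]
  refine Finset.sum_congr rfl fun t _ => ?_
  simp [Pi.smul_apply, smul_eq_mul]; ring

lemma form_add_right (M : CoxeterMatrix S) (x y z : S → ℝ) :
    form M x (y + z) = form M x y + form M x z := by
  rw [form_symm M x (y + z), form_add_left, form_symm M y x, form_symm M z x]

lemma form_smul_right (M : CoxeterMatrix S) (c : ℝ) (x z : S → ℝ) :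
    form M x (c • z) = c * form M x z := by
  rw [form_symm M x (c • z), form_smul_left, form_symm M z x]

lemma form_neg_left (M : CoxeterMatrix S) (x z : S → ℝ) :
    form M (-x) z = -form M x z := by
  have := form_smul_left M (-1) x z
  simpa using this

lemma form_neg_right (M : CoxeterMatrix S) (x z : S → ℝ) :
    form M x (-z) = -form M x z := by
  rw [form_symm M x (-z), form_neg_left, form_symm M z x]

lemma form_sub_left (M : CoxeterMatrix S) (x y z : S → ℝ) :
    form M (x - y) z = form M x z - form M y z := by
  rw [sub_eq_add_neg, form_add_left, form_neg_left, sub_eq_add_neg]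

lemma form_sub_right (M : CoxeterMatrix S) (x y z : S → ℝ) :
    form M x (y - z) = form M x y - form M x z := by
  rw [form_symm M x (y - z), form_sub_left, form_symm M y x, form_symm M z x]

lemma form_zero_left (M : CoxeterMatrix S) (z : S → ℝ) : form M 0 z = 0 := by
  simp [form]

lemma form_sroot_sroot (M : CoxeterMatrix S) (s t : S) :
    form M (sroot s) (sroot t) = formEnt M s t := by
  unfold form sroot
  rw [Finset.sum_eq_single s]
  · rw [Finset.sum_eq_single t]
    · simp
    · intro b _ hb
      simp [Pi.single_apply, hb]
    · intro h; exact absurd (Finset.mem_univ t) h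
  · intro b _ hb
    simp [Pi.single_apply, hb]
  · intro h; exact absurd (Finset.mem_univ s) h


section Geom
variable {M : CoxeterMatrix S} {cs : CoxeterSystem M W}
variable {rho : W →* ((S → ℝ) →ₗ[ℝ] (S → ℝ))} (hrho : IsGeomRep M cs rho)

lemma rho_mul_apply (u v : W) (x : S → ℝ) : rho (u * v) x = rho u (rho v x) := by
  rw [map_mul]; rfl

lemma rho_inv_cancel (v : W) (x : S → ℝ) : rho v (rho v⁻¹ x) = x := by
  rw [← rho_mul_apply, mul_inv_cancel, map_one]; rfl

lemma sroot_mem_Phi (s : S) : sroot s ∈ Phi rho :=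
  ⟨1, s, by rw [map_one]; rfl⟩

lemma Phi_rho_mem {u : S → ℝ} (v : W) (hu : u ∈ Phi rho) : rho v u ∈ Phi rho := by
  obtain ⟨w, s, rfl⟩ := hu
  exact ⟨v * w, s, (rho_mul_apply v w _).symm⟩

include hrho

lemma form_rho_simple (s : S) (x y : S → ℝ) :
    form M (rho (cs.simple s) x) (rho (cs.simple s) y) = form M x y := by
  rw [hrho s x, hrho s y]
  simp only [form_sub_left, form_sub_right, form_smul_left, form_smul_right,
    form_sroot_sroot, formEnt_diag]
  rw [form_symm M x (sroot s)]
  ring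

lemma form_rho (w : W) : ∀ x y : S → ℝ,
    form M (rho w x) (rho w y) = form M x y := by
  refine cs.simple_induction (p := fun v => ∀ x y : S → ℝ, form M (rho v x) (rho v y) = form M x y)
    w (fun i x y => form_rho_simple hrho i x y) ?_ ?_
  · intro x y; rw [map_one]; rfl
  · intro w₁ w₂ h₁ h₂ x y
    rw [rho_mul_apply w₁ w₂ x, rho_mul_apply w₁ w₂ y, h₁, h₂]

lemma rho_simple_sroot_self (s : S) : rho (cs.simple s) (sroot s) = -(sroot s) := by
  rw [hrho s (sroot s), form_sroot_sroot, formEnt_diag]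
  module

lemma Phi_neg {u : S → ℝ} (hu : u ∈ Phi rho) : -u ∈ Phi rho := by
  obtain ⟨w, s, rfl⟩ := hu
  refine ⟨w * cs.simple s, s, ?_⟩
  rw [rho_mul_apply, rho_simple_sroot_self hrho, map_neg]

lemma form_self_root {u : S → ℝ} (hu : u ∈ Phi rho) : form M u u = 2 := by
  obtain ⟨w, s, rfl⟩ := hu
  rw [form_rho hrho, form_sroot_sroot, formEnt_diag]

lemma root_ne_zero {u : S → ℝ} (hu : u ∈ Phi rho) : u ≠ 0 := by
  intro h
  have h2 := form_self_root hrho hu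
  rw [h, form_zero_left] at h2
  norm_num at h2

lemma not_pos_and_neg {u : S → ℝ} (hu : u ∈ PhiPlus rho) (hn : u ∈ PhiMinus rho) : False := by
  have : u = 0 := by
    funext s
    have h1 := hu.2 s
    have h2 := hn.2 s
    simp only [Pi.neg_apply] at h2
    simp only [Pi.zero_apply]
    linarith
  exact root_ne_zero hrho hu.1 this

lemma exists_reflection {u : S → ℝ} (hu : u ∈ Phi rho) :
    ∃ z : W, ∀ x : S → ℝ, rho z x = x - form M u x • u := by
  obtain ⟨w, s, rfl⟩ := hu
  refine ⟨w * cs.simple s * w⁻¹, fun x => ?_⟩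
  rw [rho_mul_apply, rho_mul_apply, hrho s (rho w⁻¹ x), map_sub, map_smul,
    rho_inv_cancel]
  congr 2
  have := form_rho hrho w (sroot s) (rho w⁻¹ x)
  rw [rho_inv_cancel] at this
  rw [← this]

lemma reflect_mem_Phi {u v : S → ℝ} (hu : u ∈ Phi rho) (hv : v ∈ Phi rho) :
    v - form M u v • u ∈ Phi rho := by
  obtain ⟨z, hz⟩ := exists_reflection hrho hu
  rw [← hz v]
  exact Phi_rho_mem z hv

end Geom


section IntLat
variable {M : CoxeterMatrix S} {cs : CoxeterSystem M W}
variable {rho : W →* ((S → ℝ) →ₗ[ℝ] (S → ℝ))}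

def ZVec (x : S → ℝ) : Prop := ∀ s, ∃ n : ℤ, x s = n

lemma sroot_nonneg (s t : S) : 0 ≤ sroot s t := by
  unfold sroot
  rw [Pi.single_apply]
  split <;> norm_num

lemma ZVec_sroot (s : S) : ZVec (sroot s) := by
  intro t
  unfold sroot
  rw [Pi.single_apply]
  split
  · exact ⟨1, by norm_num⟩
  · exact ⟨0, by norm_num⟩

lemma formEnt_int (hsmall : SmallType M) (s t : S) : ∃ n : ℤ, formEnt M s t = n := by
  rcases eq_or_ne s t with rfl | h
  · exact ⟨2, by rw [formEnt_diag]; norm_num⟩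
  · rcases formEnt_small hsmall h with h2 | h2
    · exact ⟨0, by rw [h2]; norm_num⟩
    · exact ⟨-1, by rw [h2]; norm_num⟩

lemma form_int (hsmall : SmallType M) {x y : S → ℝ} (hx : ZVec x) (hy : ZVec y) :
    ∃ n : ℤ, form M x y = n := by
  choose nx hnx using hx
  choose ny hny using hy
  choose nE hnE using formEnt_int hsmall
  refine ⟨∑ s : S, ∑ t : S, nx s * ny t * nE s t, ?_⟩
  unfold form
  push_cast
  exact Finset.sum_congr rfl fun s _ => Finset.sum_congr rfl fun t _ => by
    rw [hnx s, hny t, hnE s t]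

lemma root_ZVec (hsmall : SmallType M) (hrho : IsGeomRep M cs rho) {u : S → ℝ}
    (hu : u ∈ Phi rho) : ZVec u := by
  obtain ⟨w, z, rfl⟩ := hu
  suffices h : ∀ x : S → ℝ, ZVec x → ZVec (rho w x) from h _ (ZVec_sroot z)
  refine cs.simple_induction (p := fun v => ∀ x : S → ℝ, ZVec x → ZVec (rho v x)) w ?_ ?_ ?_
  · intro i x hx t
    rw [hrho i x]
    obtain ⟨n, hn⟩ := hx t
    obtain ⟨m, hm⟩ := form_int hsmall (ZVec_sroot i) hx
    obtain ⟨e, he⟩ := ZVec_sroot i t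
    refine ⟨n - m * e, ?_⟩
    simp only [Pi.sub_apply, Pi.smul_apply, smul_eq_mul, hn, hm, he]
    push_cast
    ring
  · intro x hx
    simpa using hx
  · intro w₁ w₂ h₁ h₂ x hx
    rw [rho_mul_apply]
    exact h₁ _ (h₂ _ hx)

end IntLat

section Braid
variable {M : CoxeterMatrix S} {cs : CoxeterSystem M W}

lemma simple_comm {s t : S} (h : M s t = 2) :
    cs.simple s * cs.simple t = cs.simple t * cs.simple s := by
  have h1 := cs.simple_mul_simple_pow s t
  rw [h, pow_two] at h1
  have h2 : cs.simple s * cs.simple t = (cs.simple s * cs.simple t)⁻¹ :=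
    eq_inv_of_mul_eq_one_left h1
  rwa [mul_inv_rev, cs.inv_simple, cs.inv_simple] at h2

lemma simple_braid {s t : S} (h : M s t = 3) :
    cs.simple s * cs.simple t * cs.simple s = cs.simple t * cs.simple s * cs.simple t := by
  have h1 := cs.simple_mul_simple_pow s t
  rw [h, show (3:ℕ) = 2 + 1 from rfl, pow_succ, pow_two] at h1
  have h3 : cs.simple s * cs.simple t * (cs.simple s * cs.simple t) =
      (cs.simple s * cs.simple t)⁻¹ := eq_inv_of_mul_eq_one_left h1
  rw [mul_inv_rev, cs.inv_simple, cs.inv_simple] at h3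
  have h4 := congrArg (· * cs.simple t) h3
  simpa [mul_assoc, cs.simple_mul_simple_self] using h4

end Braid

section Pos
variable {M : CoxeterMatrix S} {cs : CoxeterSystem M W}
variable {rho : W →* ((S → ℝ) →ₗ[ℝ] (S → ℝ))}

theorem ascent_pos (hsmall : SmallType M) (hrho : IsGeomRep M cs rho) :
    ∀ n : ℕ, ∀ w : W, cs.length w ≤ n → ∀ s : S,
      cs.length w < cs.length (w * cs.simple s) → rho w (sroot s) ∈ PhiPlus rho := by
  intro n
  induction n with
  | zero =>
    intro w hw s _
    have hw1 : w = 1 := cs.length_eq_zero_iff.mp (Nat.le_zero.mp hw)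
    subst hw1
    simp only [map_one, Module.End.one_apply]
    exact ⟨sroot_mem_Phi s, sroot_nonneg s⟩
  | succ n ih =>
    intro w hw s hasc
    by_cases hwn : cs.length w ≤ n
    · exact ih w hwn s hasc
    have hlen : cs.length w = n + 1 := by omega
    have hwne : w ≠ 1 := by
      intro h
      rw [h, cs.length_one] at hlen
      omega
    obtain ⟨t, ht⟩ := cs.exists_rightDescent_of_ne_one hwne
    have ht' : cs.length (w * cs.simple t) < cs.length w := ht
    have hts : t ≠ s := by
      rintro rfl
      exact absurd (ht'.trans hasc) (lt_irrefl _)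
    have hlw1 : cs.length (w * cs.simple t) + 1 = cs.length w :=
      (cs.length_mul_simple w t).resolve_left (by omega)
    set w1 := w * cs.simple t with hw1def
    have hw1n : cs.length w1 = n := by omega
    have hww1 : w = w1 * cs.simple t := by
      rw [hw1def, cs.simple_mul_simple_cancel_right]
    have hasc_t : cs.length w1 < cs.length (w1 * cs.simple t) := by
      rw [← hww1]; omega
    have hexp : rho w (sroot s) = rho w1 (sroot s) - formEnt M t s • rho w1 (sroot t) := by
      rw [hww1, rho_mul_apply, hrho t (sroot s), form_sroot_sroot, map_sub, map_smul]
    rcases lt_or_gt_of_ne (cs.length_mul_simple_ne w1 s) with hdesc | hascs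
    · -- descent of w1 at s
      have hlw2 : cs.length (w1 * cs.simple s) + 1 = cs.length w1 :=
        (cs.length_mul_simple w1 s).resolve_left (by omega)
      rcases hsmall s t hts.symm with hm2 | hm3
      · -- commuting case: contradiction
        exfalso
        have heq : w * cs.simple s = (w1 * cs.simple s) * cs.simple t := by
          calc w * cs.simple s = w1 * (cs.simple t * cs.simple s) := by
                rw [hww1, mul_assoc]
            _ = w1 * (cs.simple s * cs.simple t) := by rw [simple_comm hm2]
            _ = (w1 * cs.simple s) * cs.simple t := by rw [← mul_assoc]
        have hb := cs.length_mul_le (w1 * cs.simple s) (cs.simple t)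
        rw [cs.length_simple] at hb
        rw [heq] at hasc
        omega
      · -- braid case
        set w2 := w1 * cs.simple s with hw2def
        have hw1w2 : w1 = w2 * cs.simple s := by
          rw [hw2def, cs.simple_mul_simple_cancel_right]
        have hMts : M t s = 3 := by rw [M.isSymm.apply s t]; exact hm3
        rcases lt_or_gt_of_ne (cs.length_mul_simple_ne w2 t) with hdesc2 | hasc2
        · -- second descent: contradiction via braid
          exfalso
          have hbraid := simple_braid (cs := cs) hm3
          have heq : w * cs.simple s = ((w2 * cs.simple t) * cs.simple s) * cs.simple t := by
            calc w * cs.simple s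
                = w2 * (cs.simple s * cs.simple t * cs.simple s) := by
                  rw [hww1, hw1w2]; simp only [mul_assoc]
              _ = w2 * (cs.simple t * cs.simple s * cs.simple t) := by rw [hbraid]
              _ = ((w2 * cs.simple t) * cs.simple s) * cs.simple t := by
                  simp only [mul_assoc]
          have hlw3 : cs.length (w2 * cs.simple t) + 1 = cs.length w2 :=
            (cs.length_mul_simple w2 t).resolve_left (by omega)
          have hb1 := cs.length_mul_le ((w2 * cs.simple t) * cs.simple s) (cs.simple t)
          have hb2 := cs.length_mul_le (w2 * cs.simple t) (cs.simple s)
          rw [cs.length_simple] at hb1 hb2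
          rw [heq] at hasc
          omega
        · -- B1: rho w (sroot s) = rho w2 (sroot t)
          have e1 : rho (cs.simple t) (sroot s) = sroot s + sroot t := by
            rw [hrho t (sroot s), form_sroot_sroot, formEnt_of_three hMts]
            module
          have e2 : rho (cs.simple s) (sroot s + sroot t) = sroot t := by
            rw [hrho s _, form_add_right, form_sroot_sroot, form_sroot_sroot,
              formEnt_diag, formEnt_of_three hm3]
            module
          have hthis : rho w (sroot s) = rho w2 (sroot t) := by
            rw [hww1, hw1w2, rho_mul_apply, rho_mul_apply, e1, e2]
          have h2 : rho w2 (sroot t) ∈ PhiPlus rho := ih w2 (by omega) t hasc2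
          exact ⟨⟨w, s, rfl⟩, fun r => by rw [hthis]; exact h2.2 r⟩
    · -- Case A
      have h1 : rho w1 (sroot s) ∈ PhiPlus rho := ih w1 (by omega) s hascs
      have h2 : rho w1 (sroot t) ∈ PhiPlus rho := ih w1 (by omega) t hasc_t
      refine ⟨⟨w, s, rfl⟩, fun r => ?_⟩
      rw [hexp]
      have c1 := h1.2 r
      have c2 := h2.2 r
      simp only [Pi.sub_apply, Pi.smul_apply, smul_eq_mul]
      rcases formEnt_small hsmall hts with hc | hc <;> rw [hc] <;> linarith

end Pos


section Final
variable {M : CoxeterMatrix S} {cs : CoxeterSystem M W}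
variable {rho : W →* ((S → ℝ) →ₗ[ℝ] (S → ℝ))}
variable (hsmall : SmallType M) (hrho : IsGeomRep M cs rho)

include hsmall hrho

lemma descent_neg {w : W} {s : S} (h : cs.length (w * cs.simple s) < cs.length w) :
    rho w (sroot s) ∈ PhiMinus rho := by
  have hww' : w = (w * cs.simple s) * cs.simple s := by
    rw [cs.simple_mul_simple_cancel_right]
  have hasc : cs.length (w * cs.simple s) < cs.length ((w * cs.simple s) * cs.simple s) := by
    rw [← hww']; exact h
  have hp := ascent_pos hsmall hrho (cs.length (w * cs.simple s)) _ le_rfl s hasc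
  have hneg : rho w (sroot s) = -(rho (w * cs.simple s) (sroot s)) := by
    conv_lhs => rw [hww']
    rw [rho_mul_apply, rho_simple_sroot_self hrho, map_neg]
  show -(rho w (sroot s)) ∈ PhiPlus rho
  rw [hneg, neg_neg]
  exact hp

lemma root_pos_or_neg {u : S → ℝ} (hu : u ∈ Phi rho) :
    u ∈ PhiPlus rho ∨ u ∈ PhiMinus rho := by
  obtain ⟨w, s, rfl⟩ := hu
  rcases lt_or_gt_of_ne (cs.length_mul_simple_ne w s) with h | h
  · exact Or.inr (descent_neg hsmall hrho h)
  · exact Or.inl (ascent_pos hsmall hrho _ w le_rfl s h)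

lemma flip_simple {γ : S → ℝ} {s : S} (hγ : γ ∈ PhiPlus rho)
    (h : rho (cs.simple s) γ ∉ PhiPlus rho) : γ = sroot s := by
  have hΦ : rho (cs.simple s) γ ∈ Phi rho := Phi_rho_mem _ hγ.1
  have hneg : -(rho (cs.simple s) γ) ∈ PhiPlus rho :=
    (root_pos_or_neg hsmall hrho hΦ).resolve_left h
  have hcoord : ∀ t, t ≠ s → γ t = 0 := by
    intro t hts
    have h1 := hγ.2 t
    have h2 := hneg.2 t
    have e : (rho (cs.simple s) γ) t = γ t := by
      rw [hrho s γ]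
      simp only [Pi.sub_apply, Pi.smul_apply, smul_eq_mul, sroot, Pi.single_eq_of_ne hts]
      ring
    simp only [Pi.neg_apply, e] at h2
    linarith
  have hγs : γ = γ s • sroot s := by
    funext t
    rcases eq_or_ne t s with rfl | hts
    · simp [sroot, Pi.smul_apply]
    · simp [sroot, Pi.smul_apply, Pi.single_eq_of_ne hts, hcoord t hts]
  have h2 : form M γ γ = 2 := form_self_root hrho hγ.1
  rw [hγs, form_smul_left, form_smul_right, form_sroot_sroot, formEnt_diag] at h2
  have h3 : γ s = 1 := by nlinarith [hγ.2 s]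
  rw [hγs, h3, one_smul]

lemma invSet_finite (w : W) : (invSet rho w).Finite := by
  classical
  obtain ⟨l, hl⟩ := cs.wordProd_surjective w
  apply Set.Finite.subset (Set.finite_range
    (fun j : Fin l.length => rho (cs.wordProd (l.take j.1)) (sroot l[j.1])))
  rintro β ⟨hβp, hβm⟩
  have hwit : rho (cs.wordProd (l.take l.length))⁻¹ β ∉ PhiPlus rho := by
    rw [List.take_length, hl]
    intro hp
    exact not_pos_and_neg hrho hp hβm
  have hPex : ∃ j, rho (cs.wordProd (l.take j))⁻¹ β ∉ PhiPlus rho := ⟨l.length, hwit⟩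
  have hk : rho (cs.wordProd (l.take (Nat.find hPex)))⁻¹ β ∉ PhiPlus rho := Nat.find_spec hPex
  have hk0 : Nat.find hPex ≠ 0 := by
    intro h
    rw [h] at hk
    apply hk
    simpa using hβp
  obtain ⟨j, hjk⟩ : ∃ j, Nat.find hPex = j + 1 := ⟨Nat.find hPex - 1, by omega⟩
  have hkle : Nat.find hPex ≤ l.length := Nat.find_le hwit
  have hjlt : j < l.length := by omega
  have hQ : rho (cs.wordProd (l.take j))⁻¹ β ∈ PhiPlus rho := by
    by_contra hcon
    exact Nat.find_min hPex (by omega) hcon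
  have hprod : cs.wordProd (l.take (j+1)) =
      cs.wordProd (l.take j) * cs.simple (l[j]'hjlt) := by
    rw [← List.take_concat_get' l j hjlt, cs.wordProd_append, cs.wordProd_singleton]
  have hflip : rho (cs.simple (l[j]'hjlt)) (rho (cs.wordProd (l.take j))⁻¹ β) ∉ PhiPlus rho := by
    rw [← rho_mul_apply]
    have he : cs.simple (l[j]'hjlt) * (cs.wordProd (l.take j))⁻¹ =
        (cs.wordProd (l.take (j+1)))⁻¹ := by
      rw [hprod, mul_inv_rev, cs.inv_simple]
    rw [he, ← hjk]
    exact hk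
  have hroot := flip_simple hsmall hrho hQ hflip
  refine ⟨⟨j, hjlt⟩, ?_⟩
  show rho (cs.wordProd (l.take j)) (sroot (l[j]'hjlt)) = β
  rw [← hroot, rho_inv_cancel]


lemma sum_pos_of_PhiPlus {u : S → ℝ} (hu : u ∈ PhiPlus rho) : 0 < ∑ s : S, u s := by
  rcases (Finset.sum_nonneg (fun s _ => hu.2 s)).lt_or_eq with h | h
  · exact h
  · exfalso
    apply root_ne_zero hrho hu.1
    funext t
    exact (Finset.sum_eq_zero_iff_of_nonneg (fun s _ => hu.2 s)).mp h.symm t (Finset.mem_univ t)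

lemma reflect_mem_invSet {w : W} {a b : S → ℝ} (ha : a ∈ invSet rho w)
    (hb : b ∈ invSet rho w) (h : form M a b ≤ 0) :
    b - form M a b • a ∈ invSet rho w := by
  obtain ⟨⟨haΦ, hapos⟩, ham⟩ := ha
  obtain ⟨⟨hbΦ, hbpos⟩, hbm⟩ := hb
  have ham' : -(rho w⁻¹ a) ∈ PhiPlus rho := ham
  have hbm' : -(rho w⁻¹ b) ∈ PhiPlus rho := hbm
  have hmem : b - form M a b • a ∈ Phi rho := reflect_mem_Phi hrho haΦ hbΦ
  refine ⟨⟨hmem, fun s => ?_⟩, ?_⟩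
  · simp only [Pi.sub_apply, Pi.smul_apply, smul_eq_mul]
    nlinarith [hapos s, hbpos s]
  · show -(rho w⁻¹ (b - form M a b • a)) ∈ PhiPlus rho
    constructor
    · exact Phi_neg hrho (Phi_rho_mem _ hmem)
    · intro s
      have h1 := ham'.2 s
      have h2 := hbm'.2 s
      simp only [Pi.neg_apply] at h1 h2
      simp only [map_sub, map_smul, Pi.neg_apply, Pi.sub_apply, Pi.smul_apply, smul_eq_mul]
      nlinarith

lemma invSet_form_ge (w : W) {a b : S → ℝ} (ha : a ∈ invSet rho w)
    (hb : b ∈ invSet rho w) : -1 ≤ form M a b := by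
  by_contra hlt
  push_neg at hlt
  have hble : form M a b ≤ -2 := by
    obtain ⟨n, hn⟩ := form_int hsmall (root_ZVec hsmall hrho ha.1.1)
      (root_ZVec hsmall hrho hb.1.1)
    rw [hn] at hlt ⊢
    have h1 : n < -1 := by exact_mod_cast hlt
    have h2 : n ≤ -2 := by omega
    exact_mod_cast h2
  classical
  set P : Set (S → ℝ) := {x | x ∈ invSet rho w ∧ ∃ y ∈ invSet rho w, form M y x ≤ -2} with hPdef
  have hPfin : P.Finite := (invSet_finite hsmall hrho w).subset fun x hx => hx.1
  have hPne : P.Nonempty := ⟨b, hb, a, ha, hble⟩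
  obtain ⟨x, hxP, hmax⟩ := Set.Finite.exists_maximalFor (fun x => ∑ s : S, x s) P hPfin hPne
  obtain ⟨hx, y, hy, hyx⟩ := hxP
  have hx' : x - form M y x • y ∈ invSet rho w :=
    reflect_mem_invSet hsmall hrho hy hx (by linarith)
  have hxx : form M x x = 2 := form_self_root hrho hx.1.1
  have hx'P : x - form M y x • y ∈ P := by
    refine ⟨hx', x, hx, ?_⟩
    rw [form_sub_right, form_smul_right, form_symm M x y]
    nlinarith
  have hsum : ∑ s : S, x s < ∑ s : S, (x - form M y x • y) s := by
    have hypos := sum_pos_of_PhiPlus hsmall hrho hy.1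
    simp only [Pi.sub_apply, Pi.smul_apply, smul_eq_mul]
    rw [Finset.sum_sub_distrib, ← Finset.mul_sum]
    nlinarith
  exact absurd (hmax hx'P hsum.le) (not_le.mpr hsum)

end Final

end Lemma27


/-- **Lemma 2.7.** In small type, every inversion set `Φ_w` is a closed subset of `Φ⁺`. -/
theorem stmt5 {S : Type} [DecidableEq S] [Fintype S] {W : Type} [Group W]
    (M : CoxeterMatrix S) (hsmall : SmallType M) (cs : CoxeterSystem M W)
    (rho : W →* ((S → ℝ) →ₗ[ℝ] (S → ℝ))) (hrho : IsGeomRep M cs rho)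
    (w : W) :
    ClosedSub M rho (invSet rho w) := by
  refine ⟨fun u hu => hu.1, invSet_finite hsmall hrho w,
    fun a ha b hb => invSet_form_ge hsmall hrho w ha hb,
    fun a ha b hb hform => ?_⟩
  have hmem := reflect_mem_invSet hsmall hrho ha hb (by rw [hform]; norm_num)
  rw [hform] at hmem
  have he : b - (-1 : ℝ) • a = a + b := by module
  rwa [he] at hmem

end ArtinInj
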